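/- For every natural number m, the sum of the Walsh functions in the m-th dyadic block satisfies: sum_{k=2^m}^{2^{m+1}-1} W_k(x) = 2^m for x ∈ [0, 2^{-m-1}), = -2^m for x ∈ (2^{-m-1}, 2^{-m}), and = 0 for x ∈ (2^{-m}, 1]. -/

import Mathlib

open MeasureTheory Finset Filter

noncomputable def rademacher (n : ℕ) (x : ℝ) : ℝ :=
  if 1 ≤ x then -1 else (-1 : ℝ) ^ ⌊(2 : ℝ) ^ n * x⌋

noncomputable def walsh (n : ℕ) (x : ℝ) : ℝ :=
  ∏ i ∈ Finset.range (n + 1), if n.testBit i then rademacher (i + 1) x else 1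

lemma walsh_eq_prod (n N : ℕ) (hn : n < 2 ^ N) (x : ℝ) :
    walsh n x = ∏ i ∈ Finset.range N, (if n.testBit i then rademacher (i + 1) x else 1) := by
  unfold walsh
  have h1 : ∏ i ∈ Finset.range (n + 1), (if n.testBit i then rademacher (i + 1) x else 1)
      = ∏ i ∈ Finset.range (n + 1 + N), (if n.testBit i then rademacher (i + 1) x else 1) := by
    apply Finset.prod_subset
    · exact Finset.range_subset_range.2 (by omega)
    · intro i _ hi
      simp only [Finset.mem_range, not_lt] at hi
      have : n.testBit i = false :=
        Nat.testBit_eq_false_of_lt (lt_of_lt_of_le (Nat.lt_two_pow_self (n := n))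
          (Nat.pow_le_pow_right (by norm_num) (by omega)))
      simp [this]
  have h2 : ∏ i ∈ Finset.range N, (if n.testBit i then rademacher (i + 1) x else 1)
      = ∏ i ∈ Finset.range (n + 1 + N), (if n.testBit i then rademacher (i + 1) x else 1) := by
    apply Finset.prod_subset
    · exact Finset.range_subset_range.2 (by omega)
    · intro i _ hi
      simp only [Finset.mem_range, not_lt] at hi
      have : n.testBit i = false :=
        Nat.testBit_eq_false_of_lt (lt_of_lt_of_le hn
          (Nat.pow_le_pow_right (by norm_num) hi))
      simp [this]
  rw [h1, ← h2]

lemma walsh_two_pow_add (m j : ℕ) (hj : j < 2 ^ m) (x : ℝ) :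
    walsh (2 ^ m + j) x = rademacher (m + 1) x * walsh j x := by
  have hlt : 2 ^ m + j < 2 ^ (m + 1) := by
    have : 2 ^ (m + 1) = 2 ^ m + 2 ^ m := by ring
    omega
  rw [walsh_eq_prod (2 ^ m + j) (m + 1) hlt x, walsh_eq_prod j m hj x,
    Finset.prod_range_succ]
  have hbit : (2 ^ m + j).testBit m = true := by
    rw [Nat.testBit_two_pow_add_eq, Nat.testBit_eq_false_of_lt hj]
    rfl
  rw [hbit, if_pos rfl]
  rw [mul_comm]
  congr 1
  apply Finset.prod_congr rfl
  intro i hi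
  simp only [Finset.mem_range] at hi
  rw [Nat.testBit_two_pow_add_gt hi]

noncomputable def D (m : ℕ) (x : ℝ) : ℝ := ∑ j ∈ Finset.range (2 ^ m), walsh j x

lemma walsh_zero (x : ℝ) : walsh 0 x = 1 := by
  simp [walsh]

lemma block_sum_eq (m : ℕ) (x : ℝ) :
    ∑ k ∈ Finset.Ico (2 ^ m) (2 ^ (m + 1)), walsh k x = rademacher (m + 1) x * D m x := by
  rw [Finset.sum_Ico_eq_sum_range]
  have h : 2 ^ (m + 1) - 2 ^ m = 2 ^ m := by
    rw [pow_succ]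
    omega
  rw [h, D, Finset.mul_sum]
  apply Finset.sum_congr rfl
  intro j hj
  simp only [Finset.mem_range] at hj
  exact walsh_two_pow_add m j hj x

lemma D_succ (m : ℕ) (x : ℝ) : D (m + 1) x = (1 + rademacher (m + 1) x) * D m x := by
  have h : (2 : ℕ) ^ (m + 1) = 2 ^ m + 2 ^ m := by ring
  have h2 : ∑ j ∈ Finset.range (2 ^ m), walsh (2 ^ m + j) x = rademacher (m + 1) x * D m x := by
    rw [D, Finset.mul_sum]
    exact Finset.sum_congr rfl fun j hj => walsh_two_pow_add m j (Finset.mem_range.1 hj) x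
  have h3 : ∑ j ∈ Finset.range (2 ^ m), walsh j x = D m x := rfl
  rw [D, h, Finset.sum_range_add, h2, h3]
  ring

lemma rademacher_of_lt_one (n : ℕ) (x : ℝ) (hx : x < 1) :
    rademacher n x = (-1 : ℝ) ^ ⌊(2 : ℝ) ^ n * x⌋ := by
  rw [rademacher, if_neg (by linarith)]

lemma rademacher_one (n : ℕ) : rademacher n 1 = -1 := by
  rw [rademacher, if_pos le_rfl]

lemma two_pow_inv_le_one (m : ℕ) : ((2 : ℝ) ^ m)⁻¹ ≤ 1 := by
  rw [inv_le_one_iff₀]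
  right
  exact one_le_pow₀ (by norm_num)

lemma rademacher_eq_one (n : ℕ) (x : ℝ) (h0 : 0 ≤ x) (h1 : x < ((2 : ℝ) ^ n)⁻¹) :
    rademacher n x = 1 := by
  have hx1 : x < 1 := lt_of_lt_of_le h1 (two_pow_inv_le_one n)
  rw [rademacher_of_lt_one n x hx1]
  have hpos : (0 : ℝ) < 2 ^ n := by positivity
  have : ⌊(2 : ℝ) ^ n * x⌋ = 0 := by
    rw [Int.floor_eq_zero_iff]
    constructor
    · positivity
    · calc (2:ℝ)^n * x < 2^n * (2^n)⁻¹ := mul_lt_mul_of_pos_left h1 hpos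
        _ = 1 := mul_inv_cancel₀ (ne_of_gt hpos)
  rw [this]; norm_num

lemma rademacher_eq_neg_one (n : ℕ) (x : ℝ) (h0 : ((2 : ℝ) ^ n)⁻¹ ≤ x)
    (h1 : x < ((2 : ℝ) ^ (n - 1))⁻¹) (hn : 1 ≤ n) (hx1 : x < 1) :
    rademacher n x = -1 := by
  rw [rademacher_of_lt_one n x hx1]
  have hpos : (0 : ℝ) < 2 ^ n := by positivity
  have hfl : ⌊(2 : ℝ) ^ n * x⌋ = 1 := by
    rw [Int.floor_eq_iff]
    constructor
    · push_cast
      calc (1:ℝ) = 2^n * (2^n)⁻¹ := (mul_inv_cancel₀ (ne_of_gt hpos)).symm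
        _ ≤ 2^n * x := mul_le_mul_of_nonneg_left h0 (le_of_lt hpos)
    · push_cast
      have hh : (2:ℝ)^n = 2^(n-1) * 2 := by
        rw [← pow_succ]; congr 1; omega
      have hpos' : (0:ℝ) < 2^(n-1) := by positivity
      calc (2:ℝ)^n * x = 2 * (2^(n-1) * x) := by rw [hh]; ring
        _ < 2 * (2^(n-1) * (2^(n-1))⁻¹) :=
            mul_lt_mul_of_pos_left (mul_lt_mul_of_pos_left h1 hpos') (by norm_num)
        _ = 1 + 1 := by rw [mul_inv_cancel₀ (ne_of_gt hpos')]; norm_num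
  rw [hfl]; norm_num

lemma D_eq_two_pow (m : ℕ) (x : ℝ) (h0 : 0 ≤ x) (h1 : x < ((2 : ℝ) ^ m)⁻¹) :
    D m x = 2 ^ m := by
  induction m with
  | zero => simp [D, walsh_zero]
  | succ m ih =>
    have hmono : ((2 : ℝ) ^ (m + 1))⁻¹ ≤ ((2 : ℝ) ^ m)⁻¹ := by
      apply inv_anti₀ (by positivity)
      apply pow_le_pow_right₀ (by norm_num) (by omega)
    rw [D_succ, ih (lt_of_lt_of_le h1 hmono),
      rademacher_eq_one (m + 1) x h0 h1]
    ring

lemma D_eq_zero (m : ℕ) (x : ℝ) (hm : 1 ≤ m) (h0 : ((2 : ℝ) ^ m)⁻¹ ≤ x) (h1 : x ≤ 1) :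
    D m x = 0 := by
  induction m with
  | zero => omega
  | succ m ih =>
    rcases eq_or_lt_of_le h1 with h1' | h1'
    · subst h1'
      rw [D_succ, rademacher_one]
      ring
    · by_cases hm0 : 1 ≤ m
      · by_cases hc : ((2 : ℝ) ^ m)⁻¹ ≤ x
        · rw [D_succ, ih hm0 hc]
          ring
        · push_neg at hc
          rw [D_succ, rademacher_eq_neg_one (m + 1) x h0 (by simpa using hc) (by omega) h1']
          ring
      · have hm0' : m = 0 := by omega
        subst hm0'
        rw [D_succ, rademacher_eq_neg_one 1 x h0 (by norm_num; linarith) le_rfl h1']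
        ring

theorem walsh_block_sum (m : ℕ) (x : ℝ) (hx : x ∈ Set.Icc (0 : ℝ) 1) :
    (x ∈ Set.Ico (0 : ℝ) (((2 : ℝ) ^ (m + 1))⁻¹) →
      ∑ k ∈ Finset.Ico (2 ^ m) (2 ^ (m + 1)), walsh k x = 2 ^ m) ∧
    (x ∈ Set.Ioo (((2 : ℝ) ^ (m + 1))⁻¹) (((2 : ℝ) ^ m)⁻¹) →
      ∑ k ∈ Finset.Ico (2 ^ m) (2 ^ (m + 1)), walsh k x = -(2 ^ m)) ∧
    (x ∈ Set.Ioc (((2 : ℝ) ^ m)⁻¹) 1 →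
      ∑ k ∈ Finset.Ico (2 ^ m) (2 ^ (m + 1)), walsh k x = 0) := by
  obtain ⟨hx0, hx1⟩ := hx
  have hmono : ((2 : ℝ) ^ (m + 1))⁻¹ ≤ ((2 : ℝ) ^ m)⁻¹ := by
    apply inv_anti₀ (by positivity)
    apply pow_le_pow_right₀ (by norm_num) (by omega)
  refine ⟨?_, ?_, ?_⟩
  · rintro ⟨h0, h1⟩
    rw [block_sum_eq, rademacher_eq_one (m + 1) x h0 h1,
      D_eq_two_pow m x h0 (lt_of_lt_of_le h1 hmono)]
    ring
  · rintro ⟨h0, h1⟩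
    have hx1' : x < 1 := lt_of_lt_of_le h1 (two_pow_inv_le_one m)
    rw [block_sum_eq, rademacher_eq_neg_one (m + 1) x (le_of_lt h0) (by simpa using h1) (by omega) hx1',
      D_eq_two_pow m x hx0 h1]
    ring
  · rintro ⟨h0, h1⟩
    have hm : 1 ≤ m := by
      by_contra h
      have : m = 0 := by omega
      subst this
      norm_num at h0
      linarith
    rw [block_sum_eq, D_eq_zero m x hm (le_of_lt h0) h1]
    ring
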